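/- For every positive integer l, setting C = A_{2l} ∪ (2^{2l} − 1 + B_{2l}) and D = B_{2l} ∪ (2^{2l} − 1 + A_{2l}), one has C ∪ D = [0, 2^{2l+1} − 2], C ∩ D = {2^{2l} − 1}, 0 ∈ C, and R_C(n) = R_D(n) for every positive integer n. -/

import Mathlib

/-- `R S n` is the number of unordered representations of `n` as `s + s'`
with `s, s' ∈ S` and `s < s'`. -/
noncomputable def R (S : Set ℕ) (n : ℕ) : ℕ :=
  {p : ℕ × ℕ | p.1 ∈ S ∧ p.2 ∈ S ∧ p.1 < p.2 ∧ p.1 + p.2 = n}.ncard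

/-- The Thue–Morse set: nonnegative integers with an even number of
`1` digits in binary. -/
def A : Set ℕ := {n | Even ((Nat.digits 2 n).sum)}

/-- The complement of the Thue–Morse set. -/
def B : Set ℕ := Aᶜ

/-- `Af l = A ∩ [0, 2^l − 1]`. -/
def Af (l : ℕ) : Set ℕ := A ∩ Set.Iic (2 ^ l - 1)

/-- `Bf l = B ∩ [0, 2^l − 1]`. -/
def Bf (l : ℕ) : Set ℕ := B ∩ Set.Iic (2 ^ l - 1)

/-- `shift a S = a + S = {a + s : s ∈ S}`. -/
def shift (a : ℕ) (S : Set ℕ) : Set ℕ := (a + ·) '' S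

lemma mem_shift {a x : ℕ} {S : Set ℕ} : x ∈ shift a S ↔ ∃ s ∈ S, a + s = x := by
  simp [shift]

/-! ### Digit-sum lemmas -/

lemma dsum_rec (y : ℕ) : (Nat.digits 2 y).sum = y % 2 + (Nat.digits 2 (y / 2)).sum := by
  rcases Nat.eq_zero_or_pos y with h | h
  · simp [h]
  · rw [Nat.digits_def' (by norm_num : 1 < 2) h]; simp

lemma dsum_add_pow (l : ℕ) : ∀ y < 2 ^ l, (Nat.digits 2 (2 ^ l + y)).sum = (Nat.digits 2 y).sum + 1 := by
  induction l with
  | zero =>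
    intro y hy
    interval_cases y
    simp
  | succ l ih =>
    intro y hy
    have h2 : (2:ℕ) ^ (l+1) = 2 * 2 ^ l := by ring
    have hmod : (2 ^ (l+1) + y) % 2 = y % 2 := by omega
    have hdiv : (2 ^ (l+1) + y) / 2 = 2 ^ l + y / 2 := by omega
    have hy2 : y / 2 < 2 ^ l := by omega
    rw [dsum_rec (2 ^ (l+1) + y), hmod, hdiv, ih _ hy2, dsum_rec y]
    omega

lemma dsum_pred_pow (l : ℕ) : (Nat.digits 2 (2 ^ l - 1)).sum = l := by
  induction l with
  | zero => simp
  | succ l ih =>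
    have h2 : (2:ℕ) ^ (l+1) = 2 * 2 ^ l := by ring
    have hp : (0:ℕ) < 2 ^ l := Nat.pow_pos (by norm_num)
    have hmod : (2 ^ (l+1) - 1) % 2 = 1 := by omega
    have hdiv : (2 ^ (l+1) - 1) / 2 = 2 ^ l - 1 := by omega
    rw [dsum_rec (2 ^ (l+1) - 1), hmod, hdiv, ih]; omega

/-! ### Recursive structure of `Af` and `Bf` -/

lemma Af_succ (l : ℕ) : Af (l+1) = Af l ∪ shift (2 ^ l) (Bf l) := by
  have hp : (0:ℕ) < 2 ^ l := Nat.pow_pos (by norm_num)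
  ext x
  simp only [Af, Bf, A, B, shift, Set.mem_inter_iff, Set.mem_setOf_eq, Set.mem_Iic,
    Set.mem_union, Set.mem_image, Set.mem_compl_iff]
  constructor
  · rintro ⟨hA, hle⟩
    rcases lt_or_ge x (2 ^ l) with hx | hx
    · exact Or.inl ⟨hA, by omega⟩
    · right
      refine ⟨x - 2 ^ l, ⟨?_, by omega⟩, by omega⟩
      have := dsum_add_pow l (x - 2 ^ l) (by omega)
      rw [show 2 ^ l + (x - 2 ^ l) = x by omega] at this
      rw [this] at hA
      simpa [Nat.even_add_one] using hA
  · rintro (⟨hA, hle⟩ | ⟨y, ⟨hB, hle⟩, rfl⟩)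
    · exact ⟨hA, by have : (2:ℕ)^l ≤ 2^(l+1) := Nat.pow_le_pow_right (by norm_num) (by omega); omega⟩
    · constructor
      · rw [dsum_add_pow l y (by omega)]
        simpa [Nat.even_add_one] using hB
      · have : (2:ℕ) ^ (l+1) = 2 * 2 ^ l := by ring
        omega

lemma Bf_succ (l : ℕ) : Bf (l+1) = Bf l ∪ shift (2 ^ l) (Af l) := by
  have hp : (0:ℕ) < 2 ^ l := Nat.pow_pos (by norm_num)
  ext x
  simp only [Af, Bf, A, B, shift, Set.mem_inter_iff, Set.mem_setOf_eq, Set.mem_Iic,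
    Set.mem_union, Set.mem_image, Set.mem_compl_iff]
  constructor
  · rintro ⟨hB, hle⟩
    rcases lt_or_ge x (2 ^ l) with hx | hx
    · exact Or.inl ⟨hB, by omega⟩
    · right
      refine ⟨x - 2 ^ l, ⟨?_, by omega⟩, by omega⟩
      have := dsum_add_pow l (x - 2 ^ l) (by omega)
      rw [show 2 ^ l + (x - 2 ^ l) = x by omega] at this
      rw [this] at hB
      simpa [Nat.even_add_one] using hB
  · rintro (⟨hB, hle⟩ | ⟨y, ⟨hA, hle⟩, rfl⟩)
    · exact ⟨hB, by have : (2:ℕ)^l ≤ 2^(l+1) := Nat.pow_le_pow_right (by norm_num) (by omega); omega⟩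
    · constructor
      · rw [dsum_add_pow l y (by omega)]
        simpa [Nat.even_add_one] using hA
      · have : (2:ℕ) ^ (l+1) = 2 * 2 ^ l := by ring
        omega

/-! ### Counting lemmas -/

noncomputable def Cr (X Y : Set ℕ) (n : ℕ) : ℕ :=
  {p : ℕ × ℕ | p.1 ∈ X ∧ p.2 ∈ Y ∧ p.1 + p.2 = n}.ncard

lemma finite_aux {n : ℕ} {X : Set (ℕ × ℕ)} (h : ∀ p ∈ X, p.1 + p.2 = n) : X.Finite := by
  apply Set.Finite.subset ((Set.finite_Iic n).prod (Set.finite_Iic n))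
  intro p hp
  have := h p hp
  exact ⟨Set.mem_Iic.2 (by omega), Set.mem_Iic.2 (by omega)⟩

lemma Cr_comm (X Y : Set ℕ) (n : ℕ) : Cr X Y n = Cr Y X n := by
  rw [Cr, Cr]
  have : {p : ℕ × ℕ | p.1 ∈ X ∧ p.2 ∈ Y ∧ p.1 + p.2 = n} =
      Prod.swap '' {p : ℕ × ℕ | p.1 ∈ Y ∧ p.2 ∈ X ∧ p.1 + p.2 = n} := by
    ext ⟨x, y⟩
    constructor
    · rintro ⟨h1, h2, h3⟩
      exact ⟨(y, x), ⟨h2, h1, by omega⟩, rfl⟩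
    · rintro ⟨⟨u, v⟩, ⟨h1, h2, h3⟩, heq⟩
      rw [Prod.swap_prod_mk] at heq
      simp only [Prod.mk.injEq] at heq
      obtain ⟨rfl, rfl⟩ := heq
      exact ⟨h2, h1, by simp at h3 ⊢; omega⟩
  rw [this, Set.ncard_image_of_injective _ Prod.swap_injective]

lemma R_split (S₁ S₂ : Set ℕ) (n : ℕ) (hlt : ∀ x ∈ S₁, ∀ y ∈ S₂, x < y) :
    R (S₁ ∪ S₂) n = R S₁ n + Cr S₁ S₂ n + R S₂ n := by
  have hd : ∀ x, x ∈ S₁ → x ∈ S₂ → False := fun x h1 h2 => lt_irrefl x (hlt x h1 x h2)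
  set T₁ : Set (ℕ × ℕ) := {p | p.1 ∈ S₁ ∧ p.2 ∈ S₁ ∧ p.1 < p.2 ∧ p.1 + p.2 = n} with hT₁
  set Tc : Set (ℕ × ℕ) := {p | p.1 ∈ S₁ ∧ p.2 ∈ S₂ ∧ p.1 + p.2 = n} with hTc
  set T₂ : Set (ℕ × ℕ) := {p | p.1 ∈ S₂ ∧ p.2 ∈ S₂ ∧ p.1 < p.2 ∧ p.1 + p.2 = n} with hT₂
  have hset : {p : ℕ × ℕ | p.1 ∈ S₁ ∪ S₂ ∧ p.2 ∈ S₁ ∪ S₂ ∧ p.1 < p.2 ∧ p.1 + p.2 = n} =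
      T₁ ∪ (Tc ∪ T₂) := by
    ext ⟨x, y⟩
    simp only [hT₁, hTc, hT₂, Set.mem_setOf_eq, Set.mem_union]
    constructor
    · rintro ⟨hx | hx, hy | hy, hlt', hsum⟩
      · exact Or.inl ⟨hx, hy, hlt', hsum⟩
      · exact Or.inr (Or.inl ⟨hx, hy, hsum⟩)
      · exact absurd (hlt y hy x hx) (by omega)
      · exact Or.inr (Or.inr ⟨hx, hy, hlt', hsum⟩)
    · rintro (⟨hx, hy, hlt', hsum⟩ | ⟨hx, hy, hsum⟩ | ⟨hx, hy, hlt', hsum⟩)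
      · exact ⟨Or.inl hx, Or.inl hy, hlt', hsum⟩
      · exact ⟨Or.inl hx, Or.inr hy, hlt _ hx _ hy, hsum⟩
      · exact ⟨Or.inr hx, Or.inr hy, hlt', hsum⟩
  have f1 : T₁.Finite := finite_aux (fun p hp => hp.2.2.2)
  have fc : Tc.Finite := finite_aux (fun p hp => hp.2.2)
  have f2 : T₂.Finite := finite_aux (fun p hp => hp.2.2.2)
  have d1 : Disjoint T₁ (Tc ∪ T₂) := by
    rw [Set.disjoint_left]
    rintro ⟨x, y⟩ ⟨hx, hy, _⟩ (⟨_, hy', _⟩ | ⟨hx', _⟩)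
    · exact hd y hy hy'
    · exact hd x hx hx'
  have dc : Disjoint Tc T₂ := by
    rw [Set.disjoint_left]
    rintro ⟨x, y⟩ ⟨hx, _⟩ ⟨hx', _⟩
    exact hd x hx hx'
  rw [R, hset, Set.ncard_union_eq d1 f1 (fc.union f2), Set.ncard_union_eq dc fc f2, R, R, Cr,
    ← hT₁, ← hTc, ← hT₂]
  omega

lemma R_shift_add (a k : ℕ) (S : Set ℕ) : R (shift a S) (k + 2 * a) = R S k := by
  rw [R, R]
  have : {p : ℕ × ℕ | p.1 ∈ shift a S ∧ p.2 ∈ shift a S ∧ p.1 < p.2 ∧ p.1 + p.2 = k + 2 * a} =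
      (fun p : ℕ × ℕ => (a + p.1, a + p.2)) ''
        {p : ℕ × ℕ | p.1 ∈ S ∧ p.2 ∈ S ∧ p.1 < p.2 ∧ p.1 + p.2 = k} := by
    ext ⟨x, y⟩
    simp only [shift, Set.mem_setOf_eq, Set.mem_image, Prod.mk.injEq, Prod.exists]
    constructor
    · rintro ⟨⟨s, hs, rfl⟩, ⟨t, ht, rfl⟩, hlt', hsum⟩
      exact ⟨s, t, ⟨hs, ht, by omega, by omega⟩, rfl, rfl⟩
    · rintro ⟨s, t, ⟨hs, ht, hlt', hsum⟩, rfl, rfl⟩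
      exact ⟨⟨s, hs, rfl⟩, ⟨t, ht, rfl⟩, by omega, by omega⟩
  rw [this, Set.ncard_image_of_injective]
  intro p q h
  simp only [Prod.mk.injEq] at h
  exact Prod.ext (by omega) (by omega)

lemma R_shift_small {a n : ℕ} (S : Set ℕ) (h : n < 2 * a) : R (shift a S) n = 0 := by
  rw [R]
  convert Set.ncard_empty (ℕ × ℕ)
  ext ⟨x, y⟩
  simp only [shift, Set.mem_setOf_eq, Set.mem_image, Set.mem_empty_iff_false, iff_false]
  rintro ⟨⟨s, _, rfl⟩, ⟨t, _, rfl⟩, _, hsum⟩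
  omega

lemma Cr_shift_add (a k : ℕ) (X Y : Set ℕ) : Cr X (shift a Y) (k + a) = Cr X Y k := by
  rw [Cr, Cr]
  have : {p : ℕ × ℕ | p.1 ∈ X ∧ p.2 ∈ shift a Y ∧ p.1 + p.2 = k + a} =
      (fun p : ℕ × ℕ => (p.1, a + p.2)) ''
        {p : ℕ × ℕ | p.1 ∈ X ∧ p.2 ∈ Y ∧ p.1 + p.2 = k} := by
    ext ⟨x, y⟩
    simp only [shift, Set.mem_setOf_eq, Set.mem_image, Prod.mk.injEq, Prod.exists]
    constructor
    · rintro ⟨hx, ⟨t, ht, rfl⟩, hsum⟩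
      exact ⟨x, t, ⟨hx, ht, by omega⟩, rfl, rfl⟩
    · rintro ⟨s, t, ⟨hs, ht, hsum⟩, rfl, rfl⟩
      exact ⟨hs, ⟨t, ht, rfl⟩, by omega⟩
  rw [this, Set.ncard_image_of_injective]
  intro p q h
  simp only [Prod.mk.injEq] at h
  exact Prod.ext h.1 (by omega)

lemma Cr_shift_small {a n : ℕ} (X Y : Set ℕ) (h : n < a) : Cr X (shift a Y) n = 0 := by
  rw [Cr]
  convert Set.ncard_empty (ℕ × ℕ)
  ext ⟨x, y⟩
  simp only [shift, Set.mem_setOf_eq, Set.mem_image, Set.mem_empty_iff_false, iff_false]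
  rintro ⟨_, ⟨t, _, rfl⟩, hsum⟩
  omega

/-! ### The key lemma: `R (Af l) = R (Bf l)` -/

lemma RAB : ∀ l n : ℕ, R (Af l) n = R (Bf l) n := by
  intro l
  induction l with
  | zero =>
    intro n
    have hA : {p : ℕ × ℕ | p.1 ∈ Af 0 ∧ p.2 ∈ Af 0 ∧ p.1 < p.2 ∧ p.1 + p.2 = n} = ∅ := by
      ext ⟨x, y⟩
      simp only [Af, Set.mem_inter_iff, Set.mem_Iic, Set.mem_setOf_eq, Set.mem_empty_iff_false,
        iff_false]
      rintro ⟨⟨_, hx⟩, ⟨_, hy⟩, hlt, _⟩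
      simp at hx hy
      omega
    have hB : {p : ℕ × ℕ | p.1 ∈ Bf 0 ∧ p.2 ∈ Bf 0 ∧ p.1 < p.2 ∧ p.1 + p.2 = n} = ∅ := by
      ext ⟨x, y⟩
      simp only [Bf, Set.mem_inter_iff, Set.mem_Iic, Set.mem_setOf_eq, Set.mem_empty_iff_false,
        iff_false]
      rintro ⟨⟨_, hx⟩, ⟨_, hy⟩, hlt, _⟩
      simp at hx hy
      omega
    rw [R, R, hA, hB]
  | succ l ih =>
    intro n
    have hp : (0:ℕ) < 2 ^ l := Nat.pow_pos (by norm_num)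
    have hAlt : ∀ x ∈ Af l, ∀ y ∈ shift (2 ^ l) (Bf l), x < y := by
      rintro x ⟨_, hx⟩ y hy
      obtain ⟨s, _, rfl⟩ := mem_shift.1 hy
      simp only [Set.mem_Iic] at hx
      omega
    have hBlt : ∀ x ∈ Bf l, ∀ y ∈ shift (2 ^ l) (Af l), x < y := by
      rintro x ⟨_, hx⟩ y hy
      obtain ⟨s, _, rfl⟩ := mem_shift.1 hy
      simp only [Set.mem_Iic] at hx
      omega
    rw [Af_succ, Bf_succ, R_split _ _ _ hAlt, R_split _ _ _ hBlt]
    have e1 : Cr (Af l) (shift (2 ^ l) (Bf l)) n = Cr (Bf l) (shift (2 ^ l) (Af l)) n := by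
      by_cases h : 2 ^ l ≤ n
      · obtain ⟨k, rfl⟩ : ∃ k, n = k + 2 ^ l := ⟨n - 2 ^ l, by omega⟩
        rw [Cr_shift_add, Cr_shift_add, Cr_comm]
      · rw [Cr_shift_small _ _ (by omega), Cr_shift_small _ _ (by omega)]
    have e2 : R (shift (2 ^ l) (Bf l)) n = R (shift (2 ^ l) (Af l)) n := by
      by_cases h : 2 * 2 ^ l ≤ n
      · obtain ⟨k, rfl⟩ : ∃ k, n = k + 2 * 2 ^ l := ⟨n - 2 * 2 ^ l, by omega⟩
        rw [R_shift_add, R_shift_add, ih]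
      · rw [R_shift_small _ (by omega), R_shift_small _ (by omega)]
    rw [e1, e2, ih]

theorem chen_lev_construction (l : ℕ) (hl : 0 < l) :
    (Af (2 * l) ∪ shift (2 ^ (2 * l) - 1) (Bf (2 * l))) ∪
        (Bf (2 * l) ∪ shift (2 ^ (2 * l) - 1) (Af (2 * l))) =
      Set.Iic (2 ^ (2 * l + 1) - 2) ∧
    (Af (2 * l) ∪ shift (2 ^ (2 * l) - 1) (Bf (2 * l))) ∩
        (Bf (2 * l) ∪ shift (2 ^ (2 * l) - 1) (Af (2 * l))) =
      {2 ^ (2 * l) - 1} ∧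
    (0 : ℕ) ∈ Af (2 * l) ∪ shift (2 ^ (2 * l) - 1) (Bf (2 * l)) ∧
    ∀ n : ℕ, 0 < n →
      R (Af (2 * l) ∪ shift (2 ^ (2 * l) - 1) (Bf (2 * l))) n =
        R (Bf (2 * l) ∪ shift (2 ^ (2 * l) - 1) (Af (2 * l))) n := by
  set L := 2 * l with hL
  set m := 2 ^ L - 1 with hm
  have hp : (0:ℕ) < 2 ^ L := Nat.pow_pos (by norm_num)
  have h4 : (4:ℕ) ≤ 2 ^ L := by
    calc (4:ℕ) = 2 ^ 2 := by norm_num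
    _ ≤ 2 ^ L := Nat.pow_le_pow_right (by norm_num) (by omega)
  have h2L : (2:ℕ) ^ (L + 1) = 2 * 2 ^ L := by ring
  have hmA : m ∈ A := by
    show Even ((Nat.digits 2 m).sum)
    rw [hm, dsum_pred_pow]
    exact even_two_mul l
  have h0A : (0:ℕ) ∈ A := by simp [A]
  have hBne : ∀ b ∈ B, b ≠ 0 := by
    intro b hb hb0
    exact hb (hb0 ▸ h0A)
  have hmB : m ∉ B := fun h => h hmA
  have hClt : ∀ x ∈ Af L, ∀ y ∈ shift m (Bf L), x < y := by
    rintro x ⟨_, hx⟩ y hy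
    obtain ⟨s, ⟨hsB, _⟩, rfl⟩ := mem_shift.1 hy
    simp only [Set.mem_Iic] at hx
    have := hBne s hsB
    omega
  have hDlt : ∀ x ∈ Bf L, ∀ y ∈ shift m (Af L), x < y := by
    rintro x ⟨hxB, hx⟩ y hy
    obtain ⟨s, _, rfl⟩ := mem_shift.1 hy
    simp only [Set.mem_Iic] at hx
    have hxm : x ≠ m := fun h => hmB (h ▸ hxB)
    omega
  refine ⟨?_, ?_, ?_, ?_⟩
  · -- union
    ext x
    simp only [Af, Bf, A, B, mem_shift, Set.mem_union, Set.mem_inter_iff, Set.mem_setOf_eq,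
      Set.mem_Iic, Set.mem_compl_iff]
    constructor
    · rintro ((⟨_, hx⟩ | ⟨s, ⟨_, hs⟩, rfl⟩) | (⟨_, hx⟩ | ⟨s, ⟨_, hs⟩, rfl⟩)) <;> omega
    · intro hx
      by_cases hxm : x ≤ m
      · by_cases hA : Even ((Nat.digits 2 x).sum)
        · exact Or.inl (Or.inl ⟨hA, hxm⟩)
        · exact Or.inr (Or.inl ⟨hA, hxm⟩)
      · by_cases hA : Even ((Nat.digits 2 (x - m)).sum)
        · exact Or.inr (Or.inr ⟨x - m, ⟨hA, by omega⟩, by omega⟩)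
        · exact Or.inl (Or.inr ⟨x - m, ⟨hA, by omega⟩, by omega⟩)
  · -- intersection
    ext x
    simp only [Af, Bf, A, B, mem_shift, Set.mem_inter_iff, Set.mem_union, Set.mem_setOf_eq,
      Set.mem_Iic, Set.mem_compl_iff, Set.mem_singleton_iff]
    constructor
    · rintro ⟨(⟨hxA, hx1⟩ | ⟨s, ⟨hsB, hs⟩, rfl⟩), (⟨hxB, hx2⟩ | ⟨t, ⟨htA, ht⟩, heq⟩)⟩
      · exact absurd hxA hxB
      · omega
      · have : s ≠ 0 := fun h => hsB (h ▸ h0A)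
        omega
      · have : s = t := by omega
        exact absurd (this ▸ htA) hsB
    · rintro rfl
      refine ⟨Or.inl ⟨hmA, le_refl m⟩, Or.inr ⟨0, ⟨h0A, by omega⟩, by omega⟩⟩
  · -- 0 ∈ C
    exact Or.inl ⟨h0A, Nat.zero_le _⟩
  · -- equal representation functions
    intro n _
    rw [R_split _ _ _ hClt, R_split _ _ _ hDlt]
    have e1 : Cr (Af L) (shift m (Bf L)) n = Cr (Bf L) (shift m (Af L)) n := by
      by_cases h : m ≤ n
      · obtain ⟨k, rfl⟩ : ∃ k, n = k + m := ⟨n - m, by omega⟩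
        rw [Cr_shift_add, Cr_shift_add, Cr_comm]
      · rw [Cr_shift_small _ _ (by omega), Cr_shift_small _ _ (by omega)]
    have e2 : R (shift m (Bf L)) n = R (shift m (Af L)) n := by
      by_cases h : 2 * m ≤ n
      · obtain ⟨k, rfl⟩ : ∃ k, n = k + 2 * m := ⟨n - 2 * m, by omega⟩
        rw [R_shift_add, R_shift_add, RAB]
      · rw [R_shift_small _ (by omega), R_shift_small _ (by omega)]
    rw [e1, e2, RAB]
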